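/- Let f : ℕ → (0,∞) be an eventually non-increasing function with ∑_{n≥1} f(n) = ∞, let x be a sequence taking values in a metric space, and let E_f := {S ⊆ ℕ : lim_n (∑_{i ∈ S∩[1,n]} f(i))/(∑_{i∈[1,n]} f(i)) = 0} be the associated Erdős–Ulam ideal. Then the set Λ_x(E_f) of E_f-limit points of x is an F_σ subset of the metric space. -/

import Mathlib

open Filter Topology MeasureTheory Set

noncomputable section

/-- A lower semicontinuous submeasure on `ℕ`:  `φ : P(ℕ) → [0,∞]` with `φ(∅) = 0`,
`φ({n}) < ∞`, monotone, subadditive, and `φ(A) = lim_n φ(A ∩ {0,…,n-1})`. -/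
structure LSCSubmeasure where
  toFun : Set ℕ → ENNReal
  empty' : toFun ∅ = 0
  singleton_lt_top' : ∀ n : ℕ, toFun {n} < ⊤
  mono' : ∀ ⦃A B : Set ℕ⦄, A ⊆ B → toFun A ≤ toFun B
  subadd' : ∀ A B : Set ℕ, toFun (A ∪ B) ≤ toFun A + toFun B
  lsc' : ∀ A : Set ℕ, Tendsto (fun n => toFun (A ∩ {m | m < n})) atTop (𝓝 (toFun A))

/-- `‖A‖_φ := lim_n φ(A \ {0,…,n-1})`; since the sequence is antitone, the limit
is the infimum. -/
def LSCSubmeasure.norm (φ : LSCSubmeasure) (A : Set ℕ) : ENNReal :=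
  ⨅ n : ℕ, φ.toFun (A \ {m | m < n})

/-- The (analytic P-)ideal `I_φ = {A : ‖A‖_φ = 0}` associated with `φ`. -/
def LSCSubmeasure.ideal (φ : LSCSubmeasure) : Set (Set ℕ) :=
  {A | φ.norm A = 0}

/-- `I` is an ideal on `ℕ`: closed under finite unions and subsets, contains all
finite sets, and is proper. -/
def IsIdealOnNat (I : Set (Set ℕ)) : Prop :=
  (∀ A B : Set ℕ, A ∈ I → B ∈ I → A ∪ B ∈ I) ∧
  (∀ A B : Set ℕ, A ⊆ B → B ∈ I → A ∈ I) ∧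
  (∀ A : Set ℕ, A.Finite → A ∈ I) ∧
  (Set.univ : Set ℕ) ∉ I

/-- Convergence of the subsequence `(x_n : n ∈ A)` to `l`. -/
def ConvergesAlong {X : Type*} [TopologicalSpace X] (x : ℕ → X) (A : Set ℕ) (l : X) : Prop :=
  Tendsto x (atTop ⊓ 𝓟 A) (𝓝 l)

/-- `Λ_x(I)`: the set of `I`-limit points of the sequence `x`. -/
def idealLimitPoints {X : Type*} [TopologicalSpace X] (I : Set (Set ℕ)) (x : ℕ → X) : Set X :=
  {l | ∃ A : Set ℕ, A ∉ I ∧ ConvergesAlong x A l}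

/-- `Γ_x(I)`: the set of `I`-cluster points of the sequence `x`. -/
def idealClusterPoints {X : Type*} [TopologicalSpace X] (I : Set (Set ℕ)) (x : ℕ → X) : Set X :=
  {l | ∀ U ∈ 𝓝 l, {n | x n ∈ U} ∉ I}

/-- `Λ_x(I_φ, q)`: the set of `ℓ` such that some subsequence `(x_n : n ∈ A)` with
`‖A‖_φ ≥ q` converges to `ℓ`. -/
def LambdaQ {X : Type*} [TopologicalSpace X] (φ : LSCSubmeasure) (x : ℕ → X) (q : ℝ) : Set X :=
  {l | ∃ A : Set ℕ, ENNReal.ofReal q ≤ φ.norm A ∧ ConvergesAlong x A l}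

/-- The summable ideal `I_f = {S : ∑_{n ∈ S} f(n) < ∞}`. -/
def summableIdeal (f : ℕ → ℝ) : Set (Set ℕ) := {S | Summable (S.indicator f)}

/-- `A` has asymptotic density `d`. -/
def HasDensity (A : Set ℕ) (d : ℝ) : Prop :=
  Tendsto (fun n => (∑ i ∈ Finset.range n, A.indicator (fun _ => (1 : ℝ)) i) / (n : ℝ))
    atTop (𝓝 d)

/-- `A_B := {a_b : b ∈ B}`, where `a_0 < a_1 < ⋯` is the increasing enumeration of `A`. -/
def sel (A B : Set ℕ) : Set ℕ := (fun b => Nat.nth (· ∈ A) b) '' B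

/-- `A ≤ B`: the increasing enumerations satisfy `a_n ≤ b_n` for all `n`. -/
def enumLE (A B : Set ℕ) : Prop := ∀ n : ℕ, Nat.nth (· ∈ A) n ≤ Nat.nth (· ∈ B) n

/-- `I` is weakly thinnable: `A_B ∉ I` whenever `A` has non-zero asymptotic density
and `B ∉ I`. -/
def WeaklyThinnable (I : Set (Set ℕ)) : Prop :=
  ∀ A B : Set ℕ, (∃ d : ℝ, 0 < d ∧ HasDensity A d) → B ∉ I → sel A B ∉ I

/-- `I` is thinnable: weakly thinnable, and moreover `B_A ∉ I` under the same
hypotheses, and `X ∉ I` whenever `X ≤ Y` and `Y ∉ I`. -/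
def Thinnable (I : Set (Set ℕ)) : Prop :=
  WeaklyThinnable I ∧
  (∀ A B : Set ℕ, (∃ d : ℝ, 0 < d ∧ HasDensity A d) → B ∉ I → sel B A ∉ I) ∧
  (∀ X Y : Set ℕ, enumLE X Y → Y ∉ I → X ∉ I)

/-- The analytic P-ideal `I_φ` is strongly thinnable. -/
def StronglyThinnable (φ : LSCSubmeasure) : Prop :=
  WeaklyThinnable φ.ideal ∧
  (∀ q : ℝ, 0 < q → ∀ A : Set ℕ, ∀ a : ℝ, 0 < a → HasDensity A a →
    ∃ c : ℝ, 0 < c ∧ ∀ B : Set ℕ, ENNReal.ofReal q ≤ φ.norm B →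
      ENNReal.ofReal (c * q) ≤ φ.norm (sel B A)) ∧
  (∃ c : ℝ, 0 < c ∧ ∀ X Y : Set ℕ, enumLE X Y →
    ENNReal.ofReal c * φ.norm Y ≤ φ.norm X)

/-- The `i`-th digit (0-indexed, so this is `d_{i+1}(ω)`) of the non-terminating
dyadic expansion of `ω ∈ (0,1]`. -/
def dyadicDigit (ω : ℝ) (i : ℕ) : ℕ :=
  (⌈(2 : ℝ) ^ (i + 1) * ω⌉ - 2 * ⌈(2 : ℝ) ^ i * ω⌉ + 1).toNat

/-- `x↾ω`: the subsequence of `x` indexed by the set `{i : d_i(ω) = 1}`. -/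
def subseq {X : Type*} (x : ℕ → X) (ω : ℝ) : ℕ → X :=
  fun k => x (Nat.nth (fun i => dyadicDigit ω i = 1) k)

/-- The Erdős–Ulam ideal `E_f` associated with a weight `f`. -/
def ErdosUlamIdeal (f : ℕ → ℝ) : Set (Set ℕ) :=
  {S | Tendsto (fun n => (∑ i ∈ Finset.Icc 1 n, S.indicator f i) /
        (∑ i ∈ Finset.Icc 1 n, f i)) atTop (𝓝 0)}

/-- The upper `α`-density `d_α^⋆(S)`. -/
def upperAlphaDensity (α : ℝ) (S : Set ℕ) : ℝ :=
  limsup (fun n => (∑ i ∈ Finset.Icc 1 n, S.indicator (fun i => (i : ℝ) ^ α) i) /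
    (∑ i ∈ Finset.Icc 1 n, (i : ℝ) ^ α)) atTop

/-- `S` has `α`-asymptotic density `d`. -/
def HasAlphaDensity (α : ℝ) (S : Set ℕ) (d : ℝ) : Prop :=
  Tendsto (fun n => (∑ i ∈ Finset.Icc 1 n, S.indicator (fun i => (i : ℝ) ^ α) i) /
    (∑ i ∈ Finset.Icc 1 n, (i : ℝ) ^ α)) atTop (𝓝 d)

/-- The ideal `I_α` of sets of zero upper `α`-density. -/
def Ialpha (α : ℝ) : Set (Set ℕ) := {S | upperAlphaDensity α S = 0}


def euD (f : ℕ → ℝ) (n : ℕ) : ℝ := ∑ i ∈ Finset.Icc 1 n, f i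
def euN (f : ℕ → ℝ) (S : Set ℕ) (n : ℕ) : ℝ := ∑ i ∈ Finset.Icc 1 n, S.indicator f i
def euR (f : ℕ → ℝ) (S : Set ℕ) (n : ℕ) : ℝ := euN f S n / euD f n

lemma euD_Ioc (f : ℕ → ℝ) (n : ℕ) : euD f n = ∑ i ∈ Finset.Ioc 0 n, f i := by
  rw [euD]; congr 1

lemma euN_Ioc (f : ℕ → ℝ) (S : Set ℕ) (n : ℕ) :
    euN f S n = ∑ i ∈ Finset.Ioc 0 n, S.indicator f i := by
  rw [euN]; congr 1

lemma euN_nonneg (f : ℕ → ℝ) (hf : ∀ n, 0 ≤ f n) (S : Set ℕ) (n : ℕ) : 0 ≤ euN f S n :=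
  Finset.sum_nonneg fun i _ => Set.indicator_nonneg (fun j _ => hf j) i

lemma euD_nonneg (f : ℕ → ℝ) (hf : ∀ n, 0 ≤ f n) (n : ℕ) : 0 ≤ euD f n :=
  Finset.sum_nonneg fun i _ => hf i

lemma euD_pos (f : ℕ → ℝ) (hf : ∀ n, 0 < f n) {n : ℕ} (hn : 1 ≤ n) : 0 < euD f n :=
  Finset.sum_pos (fun i _ => hf i) (Finset.nonempty_Icc.2 hn)

lemma euR_nonneg (f : ℕ → ℝ) (hf : ∀ n, 0 ≤ f n) (S : Set ℕ) (n : ℕ) : 0 ≤ euR f S n :=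
  div_nonneg (euN_nonneg f hf S n) (euD_nonneg f hf n)

lemma euN_mono (f : ℕ → ℝ) (hf : ∀ n, 0 ≤ f n) {S T : Set ℕ} (hST : S ⊆ T) (n : ℕ) :
    euN f S n ≤ euN f T n :=
  Finset.sum_le_sum fun i _ => Set.indicator_le_indicator_of_subset hST hf i

lemma euR_mono (f : ℕ → ℝ) (hf : ∀ n, 0 ≤ f n) {S T : Set ℕ} (hST : S ⊆ T) (n : ℕ) :
    euR f S n ≤ euR f T n := by
  exact div_le_div_of_nonneg_right (euN_mono f hf hST n) (euD_nonneg f hf n)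

lemma euD_tendsto (f : ℕ → ℝ) (hf : ∀ n, 0 < f n) (hdiv : ¬ Summable f) :
    Tendsto (euD f) atTop atTop := by
  have h1 : ¬ Summable (fun i => f (i + 1)) := fun h => hdiv ((summable_nat_add_iff 1).1 h)
  have h2 := (not_summable_iff_tendsto_nat_atTop_of_nonneg (fun i => (hf _).le)).1 h1
  have h3 : euD f = fun n => ∑ i ∈ Finset.range n, f (i + 1) := by
    funext n
    rw [euD, ← Finset.Ico_add_one_right_eq_Icc, Finset.sum_Ico_eq_sum_range]
    simp [add_comm]
  rw [h3]; exact h2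

def euT {X : Type*} [MetricSpace X] (x : ℕ → X) (l : X) (ε : ℝ) : Set ℕ :=
  {i | dist (x i) l ≤ ε}

def euF {X : Type*} [MetricSpace X] (f : ℕ → ℝ) (x : ℕ → X) (k : ℕ) : Set X :=
  {l | ∀ ε : ℝ, 0 < ε → ∃ᶠ n in atTop, (1 : ℝ)/(k+1) ≤ euR f (euT x l ε) n}

lemma euF_closed {X : Type*} [MetricSpace X] (f : ℕ → ℝ) (hf : ∀ n, 0 ≤ f n)
    (x : ℕ → X) (k : ℕ) : IsClosed (euF f x k) := by
  apply isClosed_of_closure_subset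
  intro l hl ε hε
  obtain ⟨l', hl'F, hd⟩ := Metric.mem_closure_iff.1 hl (ε/2) (by positivity)
  refine (hl'F (ε/2) (by positivity)).mono fun n hn => le_trans hn (euR_mono f hf ?_ n)
  intro i hi
  have : dist (x i) l ≤ dist (x i) l' + dist l' l := dist_triangle _ _ _
  have hd' : dist l' l < ε/2 := by rwa [dist_comm] at hd
  have hi' : dist (x i) l' ≤ ε/2 := hi
  show dist (x i) l ≤ ε
  linarith

lemma euN_le_add (f : ℕ → ℝ) (hf : ∀ n, 0 ≤ f n) (S T : Set ℕ) {p n : ℕ} (hpn : p ≤ n)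
    (h : ∀ i, p < i → i ≤ n → i ∈ S → i ∈ T) :
    euN f S n ≤ euD f p + euN f T n := by
  rw [euN_Ioc, ← Finset.sum_Ioc_consecutive _ (Nat.zero_le p) hpn]
  have h1 : ∑ i ∈ Finset.Ioc 0 p, S.indicator f i ≤ euD f p := by
    rw [euD_Ioc]
    exact Finset.sum_le_sum fun i _ => Set.indicator_le_self' (fun j _ => hf j) i
  have h2 : ∑ i ∈ Finset.Ioc p n, S.indicator f i ≤ ∑ i ∈ Finset.Ioc p n, T.indicator f i := by
    refine Finset.sum_le_sum fun i hi => ?_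
    rw [Finset.mem_Ioc] at hi
    by_cases hiS : i ∈ S
    · rw [Set.indicator_of_mem hiS, Set.indicator_of_mem (h i hi.1 hi.2 hiS)]
    · rw [Set.indicator_of_notMem hiS]
      exact Set.indicator_nonneg (fun j _ => hf j) i
  have h3 : ∑ i ∈ Finset.Ioc p n, T.indicator f i ≤ euN f T n := by
    rw [euN_Ioc]
    refine Finset.sum_le_sum_of_subset_of_nonneg (Finset.Ioc_subset_Ioc (Nat.zero_le p) le_rfl)
      fun i _ _ => Set.indicator_nonneg (fun j _ => hf j) i
  linarith

lemma mem_EU_iff (f : ℕ → ℝ) (S : Set ℕ) :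
    S ∈ ErdosUlamIdeal f ↔ Tendsto (euR f S) atTop (𝓝 0) := Iff.rfl

lemma eu_forward {X : Type*} [MetricSpace X] (f : ℕ → ℝ) (hpos : ∀ n, 0 < f n)
    (hdiv : ¬ Summable f) (x : ℕ → X) (l : X)
    (h : l ∈ idealLimitPoints (ErdosUlamIdeal f) x) : ∃ k, l ∈ euF f x k := by
  obtain ⟨A, hA, hconv⟩ := h
  have hf : ∀ n, 0 ≤ f n := fun n => (hpos n).le
  have hA' : ¬ Tendsto (euR f A) atTop (𝓝 0) := hA
  rw [Metric.tendsto_atTop] at hA'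
  push_neg at hA'
  obtain ⟨ε₀, hε₀, hfr0⟩ := hA'
  have hfr : ∃ᶠ n in atTop, ε₀ ≤ euR f A n := by
    rw [frequently_atTop]
    intro N
    obtain ⟨n, hn, hd⟩ := hfr0 N
    refine ⟨n, hn, ?_⟩
    rwa [Real.dist_eq, sub_zero, abs_of_nonneg (euR_nonneg f hf A n)] at hd
  obtain ⟨k, hk⟩ := exists_nat_one_div_lt hε₀
  refine ⟨k, fun ε hε => ?_⟩
  -- convergence along A gives a tail inside euT x l ε
  have hmem : {i | x i ∈ Metric.closedBall l ε} ∈ atTop ⊓ 𝓟 A :=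
    hconv (Metric.closedBall_mem_nhds l hε)
  rw [Filter.mem_inf_principal] at hmem
  obtain ⟨N₁, hN₁⟩ := eventually_atTop.1 hmem
  set q : ℝ := 1/(k+1) with hqdef
  set δ : ℝ := ε₀ - q with hδdef
  have hδ : 0 < δ := by simp only [hδdef]; linarith
  have hD := euD_tendsto f hpos hdiv
  have hev : ∀ᶠ n in atTop, N₁ ≤ n ∧ 1 ≤ n ∧ euD f N₁ ≤ δ * euD f n := by
    have h1 := hD.eventually_ge_atTop (euD f N₁ / δ)
    filter_upwards [eventually_ge_atTop N₁, eventually_ge_atTop 1, h1] with n ha hb hc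
    exact ⟨ha, hb, (div_le_iff₀' hδ).1 hc⟩
  refine (hfr.and_eventually hev).mono ?_
  rintro n ⟨h1, h2, h3, h4⟩
  have hDn : 0 < euD f n := euD_pos f hpos h3
  have hnum : euN f A n ≤ euD f N₁ + euN f (euT x l ε) n := by
    refine euN_le_add f hf A (euT x l ε) h2 fun i hi _ hiA => ?_
    have := hN₁ i hi.le hiA
    simpa [euT, Metric.mem_closedBall] using this
  have h5 : ε₀ * euD f n ≤ euN f A n := (le_div_iff₀ hDn).1 h1
  rw [euR, le_div_iff₀ hDn]
  have hkey : q * euD f n = ε₀ * euD f n - δ * euD f n := by rw [hδdef]; ring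
  linarith

lemma eu_backward {X : Type*} [MetricSpace X] (f : ℕ → ℝ) (hpos : ∀ n, 0 < f n)
    (hdiv : ¬ Summable f) (x : ℕ → X) (l : X) (k : ℕ) (hl : l ∈ euF f x k) :
    l ∈ idealLimitPoints (ErdosUlamIdeal f) x := by
  have hf : ∀ n, 0 ≤ f n := fun n => (hpos n).le
  set q : ℝ := 1/(k+1) with hqdef
  have hq0 : 0 < q := by positivity
  have hD := euD_tendsto f hpos hdiv
  have step : ∀ p j : ℕ, ∃ m, p < m ∧ q ≤ euR f (euT x l (1/(j+1))) m ∧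
      euD f p ≤ q/2 * euD f m := by
    intro p j
    have hfr := hl (1/(j+1)) (by positivity)
    have hev : ∀ᶠ m in atTop, p < m ∧ euD f p ≤ q/2 * euD f m := by
      filter_upwards [eventually_gt_atTop p, hD.eventually_ge_atTop (2/q * euD f p)]
        with m h1 h2
      refine ⟨h1, ?_⟩
      have h3 : q/2 * (2/q * euD f p) ≤ q/2 * euD f m := by
        apply mul_le_mul_of_nonneg_left h2 (by positivity)
      have h4 : q/2 * (2/q * euD f p) = euD f p := by field_simp
      linarith
    obtain ⟨m, h1, h2, h3⟩ := (hfr.and_eventually hev).exists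
    exact ⟨m, h2, h1, h3⟩
  choose g hg1 hg2 hg3 using step
  set nn : ℕ → ℕ := fun j => Nat.rec 0 (fun j' prev => g prev j') j with hnn
  have nn_succ : ∀ j, nn (j+1) = g (nn j) j := fun j => rfl
  have nnmono : StrictMono nn := strictMono_nat_of_lt_succ fun j => hg1 (nn j) j
  set A : Set ℕ := {i | ∃ j : ℕ, dist (x i) l ≤ 1/(j+1) ∧ nn j < i ∧ i ≤ nn (j+1)} with hA
  -- key estimate
  have hest : ∀ j : ℕ, q/2 ≤ euR f A (nn (j+1)) := by
    intro j
    have hpm : nn j < nn (j+1) := hg1 (nn j) j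
    have hDm : 0 < euD f (nn (j+1)) := euD_pos f hpos (Nat.one_le_iff_ne_zero.2 (by omega))
    have hnum : euN f (euT x l (1/(j+1))) (nn (j+1)) ≤ euD f (nn j) + euN f A (nn (j+1)) := by
      refine euN_le_add f hf _ A hpm.le fun i hi1 hi2 hiT => ?_
      exact ⟨j, hiT, hi1, hi2⟩
    have h5 : q * euD f (nn (j+1)) ≤ euN f (euT x l (1/(j+1))) (nn (j+1)) :=
      (le_div_iff₀ hDm).1 (hg2 (nn j) j)
    have h6 := hg3 (nn j) j
    rw [euR, le_div_iff₀ hDm]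
    linarith
  refine ⟨A, ?_, ?_⟩
  · intro hmem
    have hA' : Tendsto (euR f A) atTop (𝓝 0) := hmem
    have hev : ∀ᶠ n in atTop, euR f A n < q/2 :=
      hA'.eventually_lt_const (by positivity)
    have hfr : ∃ᶠ n in atTop, q/2 ≤ euR f A n := by
      rw [frequently_atTop]
      intro N
      exact ⟨nn (N+1), le_trans (nnmono.le_apply) (nnmono (Nat.lt_succ_self N)).le, hest N⟩
    obtain ⟨m, h1, h2⟩ := (hfr.and_eventually hev).exists
    exact absurd h1 (not_le.2 h2)
  · rw [ConvergesAlong, Metric.tendsto_nhds]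
    intro ε hε
    rw [eventually_inf_principal]
    obtain ⟨j, hj⟩ := exists_nat_one_div_lt hε
    filter_upwards [eventually_gt_atTop (nn j)] with i hi hiA
    obtain ⟨j', hd, h1, h2⟩ := hiA
    have hjj' : j ≤ j' := by
      by_contra hcon
      push_neg at hcon
      have : nn (j'+1) ≤ nn j := nnmono.monotone hcon
      omega
    calc dist (x i) l ≤ 1/(j'+1 : ℝ) := hd
      _ ≤ 1/(j+1 : ℝ) := by
          apply one_div_le_one_div_of_le (by positivity)
          have : (j:ℝ) ≤ (j':ℝ) := by exact_mod_cast hjj'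
          linarith
      _ < ε := hj

/-- For an eventually non-increasing `f : ℕ → (0,∞)` with divergent sum
and a sequence `x` in a metric space, the set `Λ_x(E_f)` of `E_f`-limit points is an
`F_σ`-set. -/
theorem stmt15 {X : Type*} [MetricSpace X] (f : ℕ → ℝ) (hpos : ∀ n, 0 < f n)
    (hmono : ∃ N : ℕ, ∀ m n : ℕ, N ≤ m → m ≤ n → f n ≤ f m)
    (hdiv : ¬ Summable f) (x : ℕ → X) :
    ∃ F : ℕ → Set X, (∀ n, IsClosed (F n)) ∧
      idealLimitPoints (ErdosUlamIdeal f) x = ⋃ n, F n := by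
  refine ⟨euF f x, fun k => euF_closed f (fun n => (hpos n).le) x k, ?_⟩
  ext l
  simp only [Set.mem_iUnion]
  constructor
  · exact eu_forward f hpos hdiv x l
  · rintro ⟨k, hk⟩
    exact eu_backward f hpos hdiv x l k hk
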